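/- For any 0 < γ < 1, the set of all probability measures on [0,1]^d, equipped with the 1-Wasserstein distance induced by the ℓ∞-norm on [0,1]^d, admits a γ-cover of cardinality at most exp((5/γ)^d). -/

import Mathlib

open Metric MeasureTheory ENNReal Set

noncomputable def pack {Z : Type*} (ρ : Z → Z → ℝ) (B : Set Z) (ε : ℝ) : ℝ≥0∞ :=
  ⨆ (N : Finset Z) (_ : ↑N ⊆ B ∧ (↑N : Set Z).Pairwise fun a b => ε < ρ a b),
    (N.card : ℝ≥0∞)

def mball {Z : Type*} (ρ : Z → Z → ℝ) (x : Z) (r : ℝ) : Set Z := {y | ρ x y ≤ r}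

noncomputable def entScale {Z : Type*} (ρ₁ ρ₂ : Z → Z → ℝ) (α : ℝ) : ℝ :=
  sInf {s : ℝ | 0 < s ∧ ∀ x : Z, ∀ r : ℝ, 0 < r →
    pack ρ₂ (mball ρ₁ x r) s ≤ ENNReal.ofReal (Real.exp (α * r))}

noncomputable def diamScale {Z : Type*} (ρ₁ ρ₂ : Z → Z → ℝ) (α : ℝ) : ℝ :=
  sInf {s : ℝ | 0 < s ∧ ∀ x : Z, ∀ r : ℝ, 0 < r →
    ∀ y ∈ mball ρ₁ x r, ∀ z ∈ mball ρ₁ x r, ρ₂ y z ≤ Real.exp (α * r) * s}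

noncomputable def dblScale {Z : Type*} (ρ : Z → Z → ℝ) (α : ℝ) : ℝ :=
  sInf {s : ℝ | 0 < s ∧ ∀ x : Z,
    pack ρ (mball ρ x (2 * s)) s ≤ ENNReal.ofReal (Real.exp (2 * α * s))}

noncomputable def outScale {Z : Type*} (ρ : Z → Z → ℝ) (α : ℝ) : ℝ :=
  sInf {t : ℝ | ∃ γ : ℝ, 0 < γ ∧
    t = γ + (1 / α) * Real.log (pack ρ Set.univ γ).toReal}

def IsMetric {Z : Type*} (ρ : Z → Z → ℝ) : Prop :=
  (∀ x y, ρ x y = 0 ↔ x = y) ∧ (∀ x y, ρ x y = ρ y x) ∧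
    ∀ x y z, ρ x z ≤ ρ x y + ρ y z

def IsUltrametric' {Z : Type*} (ρ : Z → Z → ℝ) : Prop :=
  ∀ x y z, ρ x z ≤ max (ρ x y) (ρ y z)

def MetricPrivate {Z : Type*} [MeasurableSpace Z] (ρ₁ : Z → Z → ℝ) (α : ℝ)
    (M : Z → Measure Z) : Prop :=
  (∀ x, IsProbabilityMeasure (M x)) ∧
    ∀ x x' : Z, ∀ S : Set Z,
      M x S ≤ ENNReal.ofReal (Real.exp (α * ρ₁ x x')) * M x' S

noncomputable def accuracy {Z : Type*} [MeasurableSpace Z] (ρ₁ ρ₂ : Z → Z → ℝ)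
    (α : ℝ) : ℝ≥0∞ :=
  ⨅ (M : Z → Measure Z) (_ : MetricPrivate ρ₁ α M),
    ⨆ x : Z, ∫⁻ y, ENNReal.ofReal (ρ₂ y x) ∂(M x)

noncomputable def dEntScale (Z : Type*) [MetricSpace Z] (α : ℝ) : ℝ :=
  entScale (fun a b : Z => dist a b) (fun a b : Z => dist a b) α


namespace Stmt19Aux

/-- digit `j` of the snake (boustrophedon) path at step `i`, base `n`. -/
def dg (n i j : ℕ) : ℕ :=
  if (i / n ^ (j + 1)) % 2 = 0 then (i / n ^ j) % n else (n - 1) - (i / n ^ j) % n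

lemma dg_lt {n : ℕ} (hn : 0 < n) (i j : ℕ) : dg n i j < n := by
  unfold dg
  have h1 : (i / n ^ j) % n < n := Nat.mod_lt _ hn
  split <;> omega

lemma dg_adj {n : ℕ} (hn : 2 ≤ n) (i j : ℕ) :
    dg n i j ≤ dg n (i + 1) j + 1 ∧ dg n (i + 1) j ≤ dg n i j + 1 := by
  have hnj : 0 < n ^ j := pow_pos (by omega) j
  set q := i / n ^ j with hq
  have hdd : ∀ m : ℕ, m / n ^ (j + 1) = m / n ^ j / n := by
    intro m; rw [pow_succ, Nat.div_div_eq_div_mul]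
  have hle : q ≤ (i + 1) / n ^ j := Nat.div_le_div_right (by omega)
  have hle2 : (i + 1) / n ^ j ≤ q + 1 := by
    calc (i + 1) / n ^ j ≤ (i + n ^ j) / n ^ j := Nat.div_le_div_right (by omega)
    _ = q + 1 := by rw [Nat.add_div_right _ hnj]
  have hmod : q % n < n := Nat.mod_lt _ (by omega)
  rcases (by omega : (i + 1) / n ^ j = q ∨ (i + 1) / n ^ j = q + 1) with h | h
  · unfold dg
    rw [hdd i, hdd (i + 1), h, ← hq]
    exact ⟨Nat.le_succ _, Nat.le_succ _⟩
  · have hdecomp := Nat.div_add_mod q n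
    rcases (by omega : q % n + 1 < n ∨ q % n + 1 = n) with hc | hc
    · -- no carry into level j+1
      have e0 : q + 1 = n * (q / n) + (q % n + 1) := by omega
      have e1 : (q + 1) % n = q % n + 1 := by
        rw [e0, Nat.mul_add_mod]; exact Nat.mod_eq_of_lt hc
      have e2 : (q + 1) / n = q / n := by
        rw [e0, Nat.mul_add_div (by omega), Nat.div_eq_of_lt hc, add_zero]
      unfold dg
      rw [hdd i, hdd (i + 1), h, ← hq, e1, e2]
      split <;> omega
    · -- carry
      have e0 : q + 1 = n * (q / n + 1) := by
        have : n * (q / n + 1) = n * (q / n) + n := by ring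
        omega
      have e1 : (q + 1) % n = 0 := by rw [e0, Nat.mul_mod_right]
      have e2 : (q + 1) / n = q / n + 1 := by rw [e0, Nat.mul_div_right _ (by omega)]
      unfold dg
      rw [hdd i, hdd (i + 1), h, ← hq, e1, e2]
      have hpar2 := Nat.mod_two_eq_zero_or_one (q / n)
      have hpar3 := Nat.mod_two_eq_zero_or_one (q / n + 1)
      have hpar4 : (q / n + 1) % 2 ≠ (q / n) % 2 := by omega
      have hqq : q % n = n - 1 := by omega
      split <;> split <;> omega

/-- inverse of the snake path: builds the index from the digits top-down.
`inv n d y m` is the index determined by digits `y (d-1), ..., y (d-m)`. -/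
def inv (n d : ℕ) (y : ℕ → ℕ) : ℕ → ℕ
  | 0 => 0
  | m + 1 =>
      inv n d y m * n +
        (if inv n d y m % 2 = 0 then y (d - m - 1) else n - 1 - y (d - m - 1))

lemma inv_lt {n d : ℕ} (hn : 0 < n) {y : ℕ → ℕ} (hy : ∀ j, y j < n) (m : ℕ) :
    inv n d y m < n ^ m := by
  induction m with
  | zero => simp [inv]
  | succ m ih =>
      have h1 := hy (d - m - 1)
      rw [inv, pow_succ]
      have : inv n d y m * n + n ≤ n ^ m * n := by
        have := Nat.succ_le_of_lt ih
        calc inv n d y m * n + n = (inv n d y m + 1) * n := by ring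
        _ ≤ n ^ m * n := Nat.mul_le_mul_right _ this
      split <;> omega

lemma inv_div {n d : ℕ} (hn : 0 < n) {y : ℕ → ℕ} (hy : ∀ j, y j < n) (m k : ℕ) :
    inv n d y (m + k) / n ^ k = inv n d y m := by
  induction k with
  | zero => simp
  | succ k ih =>
      have hstep : inv n d y (m + k + 1) / n = inv n d y (m + k) := by
        rw [inv]
        have h1 := hy (d - (m + k) - 1)
        rw [Nat.mul_comm (inv n d y (m + k)) n, Nat.mul_add_div hn,
          Nat.div_eq_of_lt (by split <;> omega), add_zero]
      show inv n d y (m + k + 1) / n ^ (k + 1) = _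
      rw [pow_succ', ← Nat.div_div_eq_div_mul, hstep]
      exact ih

lemma dg_inv {n d : ℕ} (hn : 0 < n) {y : ℕ → ℕ} (hy : ∀ j, y j < n) {j : ℕ} (hj : j < d) :
    dg n (inv n d y d) j = y j := by
  have h1 : inv n d y d / n ^ j = inv n d y (d - j) := by
    have := inv_div hn hy (d := d) (d - j) j
    rw [Nat.sub_add_cancel (by omega)] at this
    exact this
  have h2 : inv n d y d / n ^ (j + 1) = inv n d y (d - j - 1) := by
    have := inv_div hn hy (d := d) (d - j - 1) (j + 1)
    rw [(by omega : d - j - 1 + (j + 1) = d)] at this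
    exact this
  have h3 : inv n d y (d - j) =
      inv n d y (d - j - 1) * n +
        (if inv n d y (d - j - 1) % 2 = 0 then y j else n - 1 - y j) := by
    have hd : d - j = (d - j - 1) + 1 := by omega
    rw [hd, inv]
    have h5 : d - (d - j - 1) - 1 = j := by omega
    rw [h5]
    norm_num
  have hyj := hy j
  have hlt : (if inv n d y (d - j - 1) % 2 = 0 then y j else n - 1 - y j) < n := by
    split <;> omega
  have hmod : (inv n d y (d - j - 1) * n +
      (if inv n d y (d - j - 1) % 2 = 0 then y j else n - 1 - y j)) % n =
      (if inv n d y (d - j - 1) % 2 = 0 then y j else n - 1 - y j) := by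
    rw [Nat.mul_comm, Nat.mul_add_mod]
    exact Nat.mod_eq_of_lt hlt
  unfold dg
  rw [h1, h2, h3, hmod]
  by_cases hc : inv n d y (d - j - 1) % 2 = 0
  · simp [hc]
  · simp [hc]
    omega

section Geometry

abbrev Z (d : ℕ) := ↥(Set.Icc (0 : Fin d → ℝ) 1)

/-- rounding a coordinate to a grid digit -/
noncomputable def rd (n : ℕ) (x : ℝ) : ℕ := min (n - 1) ⌊x * n⌋₊

lemma rd_lt {n : ℕ} (hn : 0 < n) (x : ℝ) : rd n x < n :=
  lt_of_le_of_lt (min_le_left _ _) (by omega)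

lemma rd_dist {n : ℕ} (hn : 0 < n) {x : ℝ} (hx0 : 0 ≤ x) (hx1 : x ≤ 1) :
    |x - ((rd n x : ℝ) + 1) / n| ≤ 1 / n := by
  have hn' : (0 : ℝ) < n := by exact_mod_cast hn
  have hxn : 0 ≤ x * n := by positivity
  rcases le_or_gt n ⌊x * n⌋₊ with h | h
  · -- x = 1
    have h1 : (n : ℝ) ≤ x * n := (Nat.le_floor_iff hxn).mp h
    have hx2 : x * n ≤ n := by nlinarith
    have hx3 : x = 1 := by nlinarith
    have hrd : rd n x = n - 1 := min_eq_left (by omega)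
    rw [hrd, hx3]
    have : ((n - 1 : ℕ) : ℝ) + 1 = n := by
      rw [Nat.cast_sub (by omega)]; ring_nf
    rw [this, div_self (ne_of_gt hn'), sub_self, abs_zero]
    positivity
  · have hrd : rd n x = ⌊x * n⌋₊ := min_eq_right (by omega)
    have h1 : (⌊x * n⌋₊ : ℝ) ≤ x * n := Nat.floor_le hxn
    have h2 : x * n < (⌊x * n⌋₊ : ℝ) + 1 := Nat.lt_floor_add_one _
    rw [hrd, abs_le]
    constructor
    · have hb : ((⌊x * n⌋₊ : ℝ) + 1) / n ≤ x + 1 / n := by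
        rw [div_le_iff₀ hn']
        have he : (x + 1 / n) * n = x * n + 1 := by field_simp
        rw [he]; linarith
      linarith
    · have hb : x ≤ ((⌊x * n⌋₊ : ℝ) + 1) / n := by
        rw [le_div_iff₀ hn']; linarith
      have h0 : (0:ℝ) ≤ 1 / n := by positivity
      linarith

variable (d n : ℕ)

noncomputable def ptv (i : ℕ) : Fin d → ℝ := fun j => ((dg n i j.1 : ℝ) + 1) / n

lemma ptv_mem (hn : 0 < n) (i : ℕ) : ptv d n i ∈ Set.Icc (0 : Fin d → ℝ) 1 := by
  constructor <;> intro j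
  · show (0:ℝ) ≤ ptv d n i j
    simp only [ptv]
    positivity
  · show ptv d n i j ≤ 1
    have := dg_lt hn i j.1
    rw [ptv, div_le_one (by exact_mod_cast hn)]
    have : (dg n i j.1 : ℝ) + 1 ≤ n := by exact_mod_cast this
    exact this

noncomputable def pt (hn : 0 < n) (i : ℕ) : Z d := ⟨ptv d n i, ptv_mem d n hn i⟩

noncomputable def Tv (x : Fin d → ℝ) : Fin d → ℝ := fun j => ((rd n (x j) : ℝ) + 1) / n

lemma Tv_mem (hn : 0 < n) (x : Fin d → ℝ) : Tv d n x ∈ Set.Icc (0 : Fin d → ℝ) 1 := by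
  constructor <;> intro j
  · show (0:ℝ) ≤ Tv d n x j
    simp only [Tv]
    positivity
  · show Tv d n x j ≤ 1
    have := rd_lt hn (x j)
    rw [Tv, div_le_one (by exact_mod_cast hn)]
    exact_mod_cast this

noncomputable def T (hn : 0 < n) (x : Z d) : Z d := ⟨Tv d n x.1, Tv_mem d n hn x.1⟩

lemma dist_T (hn : 0 < n) (x : Z d) : dist x (T d n hn x) ≤ 1 / n := by
  rw [Subtype.dist_eq]
  rw [dist_pi_le_iff (by positivity)]
  intro j
  rw [Real.dist_eq]
  exact rd_dist hn (x.2.1 j) (x.2.2 j)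

lemma dist_pt_adj (hn : 2 ≤ n) (i : ℕ) :
    dist (pt d n (by omega) i) (pt d n (by omega) (i + 1)) ≤ 1 / n := by
  rw [Subtype.dist_eq, dist_pi_le_iff (by positivity)]
  intro j
  rw [Real.dist_eq, pt, pt]
  show |ptv d n i j - ptv d n (i + 1) j| ≤ 1 / n
  have hadj := dg_adj hn i j.1
  have h1 : ((dg n i j.1 : ℝ)) ≤ (dg n (i+1) j.1 : ℝ) + 1 := by exact_mod_cast hadj.1
  have h2 : ((dg n (i+1) j.1 : ℝ)) ≤ (dg n i j.1 : ℝ) + 1 := by exact_mod_cast hadj.2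
  have hn' : (0:ℝ) < n := by exact_mod_cast (by omega : 0 < n)
  have he : ptv d n i j - ptv d n (i + 1) j = ((dg n i j.1 : ℝ) - dg n (i+1) j.1) / n := by
    rw [ptv, ptv]; ring
  rw [he, abs_div, abs_of_pos hn']
  gcongr
  rw [abs_le]
  constructor <;> linarith

/-- index of the grid point that `x` rounds to -/
noncomputable def idx (x : Z d) : ℕ :=
  inv n d (fun j => if h : j < d then rd n (x.1 ⟨j, h⟩) else 0) d

lemma yfun_lt {d n : ℕ} (hn : 0 < n) (x : Z d) :
    ∀ j, (fun j => if h : j < d then rd n (x.1 ⟨j, h⟩) else 0) j < n := by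
  intro j
  by_cases h : j < d
  · simp only [dif_pos h]; exact rd_lt hn _
  · simp only [dif_neg h]; omega

lemma idx_lt (hn : 0 < n) (x : Z d) : idx d n x < n ^ d :=
  inv_lt hn (yfun_lt hn x) d

lemma T_eq_pt (hn : 0 < n) (x : Z d) : T d n hn x = pt d n hn (idx d n x) := by
  apply Subtype.ext
  funext j
  show Tv d n x.1 j = ptv d n (idx d n x) j
  rw [Tv, ptv, idx]
  congr 2
  rw [dg_inv hn (yfun_lt hn x) j.2]
  rw [dif_pos j.2]

lemma pt_inj (hn : 0 < n) {i i' : ℕ} (hi : i < n ^ d) (hi' : i' < n ^ d)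
    (h : pt d n hn i = pt d n hn i') : i = i' := by
  -- via bijectivity of the digit map
  have hF : Function.Surjective
      (fun (i : Fin (n ^ d)) (j : Fin d) => (⟨dg n i.1 j.1, dg_lt hn i.1 j.1⟩ : Fin n)) := by
    intro y
    have hy : ∀ j, (fun j => if h : j < d then (y ⟨j, h⟩).1 else 0) j < n := by
      intro j
      by_cases h : j < d
      · simp only [dif_pos h]; exact (y ⟨j, h⟩).2
      · simp only [dif_neg h]; omega
    refine ⟨⟨inv n d _ d, inv_lt hn hy d⟩, ?_⟩
    funext j
    apply Fin.ext
    show dg n (inv n d _ d) j.1 = (y j).1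
    rw [dg_inv hn hy j.2]
    rw [dif_pos j.2]
  have hcard : Fintype.card (Fin (n ^ d)) = Fintype.card (Fin d → Fin n) := by
    simp [Fintype.card_fun]
  have hbij := (Fintype.bijective_iff_surjective_and_card _).mpr ⟨hF, hcard⟩
  have hdg : ∀ j : Fin d, dg n i j.1 = dg n i' j.1 := by
    intro j
    have he := congrFun (congrArg Subtype.val h) j
    have hne : (n:ℝ) ≠ 0 := by exact_mod_cast (by omega : n ≠ 0)
    simp only [pt, ptv] at he
    field_simp [hne] at he
    have he' : dg n i j.1 + 1 = dg n i' j.1 + 1 := by exact_mod_cast he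
    omega
  have := hbij.1 (a₁ := ⟨i, hi⟩) (a₂ := ⟨i', hi'⟩) ?_
  · exact congrArg Fin.val this
  · funext j
    exact Fin.ext (hdg j)

end Geometry
section Carry

/-- cumulative-floor rounding of weights to multiples of 1/N, moving at most 1/N
of mass between consecutive indices. -/
lemma carry_exists {N : ℕ} (hN : 0 < N) (w : ℕ → ℝ) (hw0 : ∀ i, 0 ≤ w i)
    (hw1 : ∑ i ∈ Finset.range N, w i = 1) :
    ∃ k : ℕ → ℕ, (∀ i, N ≤ i → k i = 0) ∧ (∑ i ∈ Finset.range N, k i = N) ∧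
      ∀ i ≤ N, |∑ j ∈ Finset.range i, (w j - (k j : ℝ) / N)| ≤ 1 / N := by
  have hN' : (0:ℝ) < N := by exact_mod_cast hN
  set cum : ℕ → ℝ := fun i => ∑ j ∈ Finset.range (i + 1), w j with hcum
  have hcum0 : ∀ i, 0 ≤ cum i := fun i => Finset.sum_nonneg fun j _ => hw0 j
  set K : ℕ → ℕ := fun i => ⌊cum i * N⌋₊ with hK
  have hcummono : ∀ i, cum i ≤ cum (i + 1) := by
    intro i
    apply Finset.sum_le_sum_of_subset_of_nonneg (Finset.range_subset_range.mpr (by omega))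
    exact fun j _ _ => hw0 j
  have hKmono : ∀ i, K i ≤ K (i + 1) := fun i =>
    Nat.floor_le_floor (by nlinarith [hcummono i])
  have hKle : ∀ i, (K i : ℝ) ≤ cum i * N := fun i =>
    Nat.floor_le (mul_nonneg (hcum0 i) hN'.le)
  have hKgt : ∀ i, cum i * N < K i + 1 := fun i => Nat.lt_floor_add_one _
  set k : ℕ → ℕ := fun i => if N ≤ i then 0 else if i = 0 then K 0 else K i - K (i - 1)
    with hk
  have hpartial : ∀ i, i < N → ∑ j ∈ Finset.range (i + 1), k j = K i := by
    intro i
    induction i with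
    | zero =>
        intro _
        rw [Finset.sum_range_one]
        show (if N ≤ 0 then 0 else if 0 = 0 then K 0 else K 0 - K (0 - 1)) = K 0
        rw [if_neg (by omega), if_pos rfl]
    | succ i ih =>
        intro h
        rw [Finset.sum_range_succ, ih (by omega)]
        have hki : k (i + 1) = K (i + 1) - K i := by
          show (if N ≤ i + 1 then 0 else if i + 1 = 0 then K 0 else K (i + 1) - K (i + 1 - 1))
              = K (i + 1) - K i
          rw [if_neg (by omega), if_neg (by omega), Nat.add_sub_cancel]
        rw [hki]
        have := hKmono i
        omega
  have htop : K (N - 1) = N := by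
    have hcumtop : cum (N - 1) = 1 := by
      rw [hcum]; simp only
      rw [(by omega : N - 1 + 1 = N)]
      exact hw1
    rw [hK]; simp only
    rw [hcumtop, one_mul, Nat.floor_natCast]
  have hsum : ∑ i ∈ Finset.range N, k i = N := by
    have := hpartial (N - 1) (by omega)
    rw [(by omega : N - 1 + 1 = N)] at this
    rw [this, htop]
  have hzero : ∀ i, N ≤ i → k i = 0 := by
    intro i hi
    show (if N ≤ i then 0 else if i = 0 then K 0 else K i - K (i - 1)) = 0
    rw [if_pos hi]
  refine ⟨k, hzero, hsum, ?_⟩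
  intro i hi
  match i with
  | 0 =>
      rw [Finset.range_zero, Finset.sum_empty, abs_zero]
      positivity
  | (m + 1) =>
      have hmN : m < N := by omega
      rw [Finset.sum_sub_distrib, ← Finset.sum_div, ← Nat.cast_sum, hpartial m hmN]
      have h1 : ∑ j ∈ Finset.range (m + 1), w j = cum m := rfl
      rw [h1, abs_le]
      constructor
      · have : (K m : ℝ) / N ≤ cum m := by
          rw [div_le_iff₀ hN']; exact hKle m
        have h0 : (0:ℝ) ≤ 1 / N := by positivity
        linarith
      · have : cum m ≤ ((K m : ℝ) + 1) / N := by
          rw [le_div_iff₀ hN']; linarith [hKgt m]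
        have he : ((K m : ℝ) + 1) / N = K m / N + 1 / N := by ring
        linarith [he ▸ this]
  
end Carry

section MeasureApprox

variable {d n : ℕ}

noncomputable def Cset (d n : ℕ) (hn : 0 < n) (i : ℕ) : Set (Z d) :=
  {x | T d n hn x = pt d n hn i}

lemma measurable_rd (n : ℕ) : Measurable (rd n) := by
  have h1 : Measurable fun x : ℝ => ⌊x * (n:ℝ)⌋₊ :=
    (measurable_id.mul_const _).nat_floor
  exact (measurable_from_top (f := fun m : ℕ => min (n - 1) m)).comp h1

lemma measurableSet_Cset (hn : 0 < n) (i : ℕ) : MeasurableSet (Cset d n hn i) := by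
  have hne : (n : ℝ) ≠ 0 := by exact_mod_cast hn.ne'
  have heq : Cset d n hn i =
      ⋂ j : Fin d, ((fun x : Z d => rd n (x.1 j)) ⁻¹' {dg n i j.1}) := by
    ext x
    simp only [Cset, Set.mem_setOf_eq, Set.mem_iInter, Set.mem_preimage,
      Set.mem_singleton_iff]
    constructor
    · intro h j
      have he := congrFun (congrArg Subtype.val h) j
      simp only [T, Tv, pt, ptv] at he
      field_simp [hne] at he
      have he' : rd n (x.1 j) + 1 = dg n i j.1 + 1 := by exact_mod_cast he
      omega
    · intro h
      apply Subtype.ext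
      funext j
      show ((rd n (x.1 j) : ℝ) + 1) / n = ((dg n i j.1 : ℝ) + 1) / n
      rw [h j]
  rw [heq]
  exact MeasurableSet.iInter fun j =>
    ((measurable_rd n).comp ((measurable_pi_apply j).comp measurable_subtype_coe))
      (measurableSet_singleton _)

lemma mem_Cset_idx (hn : 0 < n) (x : Z d) : x ∈ Cset d n hn (idx d n x) :=
  T_eq_pt d n hn x

lemma Cset_disjoint (hn : 0 < n) {i i' : ℕ} (hi : i < n ^ d) (hi' : i' < n ^ d)
    (hne : i ≠ i') : Disjoint (Cset d n hn i) (Cset d n hn i') := by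
  rw [Set.disjoint_left]
  intro x hx hx'
  exact hne (pt_inj d n hn hi hi' (hx.symm.trans hx'))

noncomputable def nu (d n : ℕ) (hn : 0 < n) (k : ℕ → ℕ) : Measure (Z d) :=
  ∑ i ∈ Finset.range (n ^ d),
    ((k i : ℝ≥0∞) / ((n ^ d : ℕ) : ℝ≥0∞)) • Measure.dirac (pt d n hn i)

lemma nu_univ (hn : 0 < n) (k : ℕ → ℕ) :
    nu d n hn k Set.univ
      = ((∑ i ∈ Finset.range (n ^ d), k i : ℕ) : ℝ≥0∞) / ((n ^ d : ℕ) : ℝ≥0∞) := by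
  rw [nu, Measure.finset_sum_apply]
  simp only [Measure.smul_apply, smul_eq_mul, measure_univ, mul_one]
  rw [ENNReal.div_eq_inv_mul]
  rw [Nat.cast_sum, Finset.mul_sum]
  exact Finset.sum_congr rfl fun i _ => by rw [ENNReal.div_eq_inv_mul]

lemma nu_prob (hn : 0 < n) (k : ℕ → ℕ) (hs : ∑ i ∈ Finset.range (n ^ d), k i = n ^ d) :
    IsProbabilityMeasure (nu d n hn k) := by
  constructor
  rw [nu_univ hn k, hs]
  exact ENNReal.div_self (by exact_mod_cast (pow_pos hn d).ne') (by simp)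

lemma lip_integrable (f : Z d → ℝ) (hf : LipschitzWith 1 f) (m : Measure (Z d))
    [IsFiniteMeasure m] : Integrable f m := by
  have hz : (0 : Fin d → ℝ) ∈ Set.Icc (0 : Fin d → ℝ) 1 :=
    ⟨le_refl _, fun j => zero_le_one⟩
  set z0 : Z d := ⟨0, hz⟩ with hz0
  have hb : ∀ x : Z d, ‖f x‖ ≤ ‖f z0‖ + 1 := by
    intro x
    have hd : dist x z0 ≤ 1 := by
      rw [Subtype.dist_eq, dist_pi_le_iff zero_le_one]
      intro j
      rw [Real.dist_eq]
      have h1 := x.2.1 j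
      have h2 := x.2.2 j
      have : (z0.1 : Fin d → ℝ) j = 0 := rfl
      rw [this, sub_zero, abs_le]
      exact ⟨by linarith [h1], h2⟩
    have hlip := hf.dist_le_mul x z0
    rw [NNReal.coe_one, one_mul, Real.dist_eq] at hlip
    have := abs_sub_abs_le_abs_sub (f x) (f z0)
    simp only [Real.norm_eq_abs]
    linarith
  exact (integrable_const (‖f z0‖ + 1)).mono'
    (hf.continuous.aestronglyMeasurable) (Filter.Eventually.of_forall hb)

lemma integral_nu (hn : 0 < n) (k : ℕ → ℕ) (f : Z d → ℝ) (hf : LipschitzWith 1 f) :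
    ∫ x, f x ∂(nu d n hn k)
      = ∑ i ∈ Finset.range (n ^ d), ((k i : ℝ) / ((n ^ d : ℕ) : ℝ)) * f (pt d n hn i) := by
  have hc : ∀ i : ℕ, (k i : ℝ≥0∞) / ((n ^ d : ℕ) : ℝ≥0∞) ≠ ∞ := by
    intro i
    exact (ENNReal.div_lt_top (by simp) (by exact_mod_cast (pow_pos hn d).ne')).ne
  have hint : ∀ i ∈ Finset.range (n ^ d),
      Integrable f (((k i : ℝ≥0∞) / ((n ^ d : ℕ) : ℝ≥0∞)) • Measure.dirac (pt d n hn i)) := by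
    intro i _
    have : IsFiniteMeasure (((k i : ℝ≥0∞) / ((n ^ d : ℕ) : ℝ≥0∞)) •
        Measure.dirac (pt d n hn i)) := by
      constructor
      rw [Measure.smul_apply, smul_eq_mul, measure_univ, mul_one]
      exact (hc i).lt_top
    exact lip_integrable f hf _
  rw [nu, integral_finset_sum_measure hint]
  refine Finset.sum_congr rfl fun i _ => ?_
  rw [integral_smul_measure, integral_dirac' f _ hf.continuous.stronglyMeasurable]
  simp [ENNReal.toReal_div, smul_eq_mul]

end MeasureApprox

section Approx

lemma approx (d n : ℕ) (hn2 : 2 ≤ n) (μ : Measure (Z d)) [hμ : IsProbabilityMeasure μ] :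
    ∃ k : ℕ → ℕ, (∀ i, n ^ d ≤ i → k i = 0) ∧ (∑ i ∈ Finset.range (n ^ d), k i = n ^ d) ∧
      ∀ f : Z d → ℝ, LipschitzWith 1 f →
        |∫ x, f x ∂μ - ∫ x, f x ∂(nu d n (by omega) k)| ≤ 2 / n := by
  have hn0 : 0 < n := by omega
  set N := n ^ d with hNdef
  have hN : 0 < N := pow_pos hn0 d
  have hN' : (0:ℝ) < N := by exact_mod_cast hN
  have hn' : (0:ℝ) < n := by exact_mod_cast hn0
  set w : ℕ → ℝ := fun i => (μ (Cset d n hn0 i)).toReal with hw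
  have hw0 : ∀ i, 0 ≤ w i := fun i => ENNReal.toReal_nonneg
  have hdisj : (↑(Finset.range N) : Set ℕ).PairwiseDisjoint (Cset d n hn0) := by
    intro i hi i' hi' hne
    simp only [Finset.coe_range, Set.mem_Iio] at hi hi'
    exact Cset_disjoint hn0 hi hi' hne
  have hU : ⋃ i ∈ Finset.range N, Cset d n hn0 i = Set.univ := by
    ext x
    simp only [Set.mem_iUnion, Set.mem_univ, iff_true, Finset.mem_range]
    exact ⟨idx d n x, idx_lt d n hn0 x, mem_Cset_idx hn0 x⟩
  have hmeasμ : μ Set.univ = ∑ i ∈ Finset.range N, μ (Cset d n hn0 i) := by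
    rw [← hU]
    exact measure_biUnion_finset hdisj fun i _ => measurableSet_Cset hn0 i
  have hwsum : ∑ i ∈ Finset.range N, w i = 1 := by
    rw [hw]
    rw [← ENNReal.toReal_sum (fun i _ => measure_ne_top μ _), ← hmeasμ, measure_univ]
    rfl
  obtain ⟨k, hk0, hksum, hkbd⟩ := carry_exists hN w hw0 hwsum
  refine ⟨k, hk0, hksum, ?_⟩
  intro f hf
  have hint : Integrable f μ := lip_integrable f hf μ
  set G : ℕ → ℝ := fun i => f (pt d n hn0 i) with hG
  have hIν : ∫ x, f x ∂(nu d n hn0 k)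
      = ∑ i ∈ Finset.range N, ((k i : ℝ) / ((N : ℕ) : ℝ)) * G i :=
    integral_nu hn0 k f hf
  have hIμ : ∫ x, f x ∂μ = ∑ i ∈ Finset.range N, ∫ x in Cset d n hn0 i, f x ∂μ := by
    rw [← MeasureTheory.setIntegral_univ, ← hU]
    exact integral_biUnion_finset _ (fun i _ => measurableSet_Cset hn0 i) hdisj
      (fun i _ => hint.integrableOn)
  -- Term 1
  have hterm1 : |∫ x, f x ∂μ - ∑ i ∈ Finset.range N, w i * G i| ≤ 1 / n := by
    rw [hIμ, ← Finset.sum_sub_distrib]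
    calc |∑ i ∈ Finset.range N, ((∫ x in Cset d n hn0 i, f x ∂μ) - w i * G i)|
        ≤ ∑ i ∈ Finset.range N, |(∫ x in Cset d n hn0 i, f x ∂μ) - w i * G i| :=
          Finset.abs_sum_le_sum_abs _ _
      _ ≤ ∑ i ∈ Finset.range N, (1 / n) * w i := by
          apply Finset.sum_le_sum
          intro i _
          have he : (∫ x in Cset d n hn0 i, f x ∂μ) - w i * G i
              = ∫ x in Cset d n hn0 i, (f x - G i) ∂μ := by
            rw [integral_sub hint.integrableOn
              (integrableOn_const (measure_lt_top μ _).ne)]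
            rw [setIntegral_const, smul_eq_mul]
            rfl
          rw [he]
          have hb : ∀ x ∈ Cset d n hn0 i, ‖f x - G i‖ ≤ 1 / n := by
            intro x hx
            have hTx : T d n hn0 x = pt d n hn0 i := hx
            have hlip := hf.dist_le_mul x (pt d n hn0 i)
            rw [NNReal.coe_one, one_mul, Real.dist_eq] at hlip
            rw [Real.norm_eq_abs]
            calc |f x - G i| ≤ dist x (pt d n hn0 i) := hlip
              _ = dist x (T d n hn0 x) := by rw [hTx]
              _ ≤ 1 / n := dist_T d n hn0 x
          have := norm_setIntegral_le_of_norm_le_const (measure_lt_top μ _) hb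
          rw [Real.norm_eq_abs] at this
          exact this
      _ = 1 / n := by rw [← Finset.mul_sum, hwsum, mul_one]
  -- Term 2 (Abel summation)
  have hterm2 : |(∑ i ∈ Finset.range N, w i * G i)
      - ∑ i ∈ Finset.range N, ((k i : ℝ) / N) * G i| ≤ 1 / n := by
    have hsplit : (∑ i ∈ Finset.range N, w i * G i)
        - ∑ i ∈ Finset.range N, ((k i : ℝ) / N) * G i
        = ∑ i ∈ Finset.range N, G i • (w i - (k i : ℝ) / N) := by
      rw [← Finset.sum_sub_distrib]
      exact Finset.sum_congr rfl fun i _ => by rw [smul_eq_mul]; ring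
    rw [hsplit, Finset.sum_range_by_parts]
    have hg0 : ∑ i ∈ Finset.range N, (w i - (k i : ℝ) / N) = 0 := by
      rw [Finset.sum_sub_distrib, hwsum, ← Finset.sum_div, ← Nat.cast_sum, hksum]
      rw [div_self hN'.ne']
      ring
    rw [hg0, smul_zero, zero_sub, abs_neg]
    calc |∑ i ∈ Finset.range (N - 1),
            (G (i + 1) - G i) • ∑ j ∈ Finset.range (i + 1), (w j - (k j : ℝ) / N)|
        ≤ ∑ i ∈ Finset.range (N - 1),
            |(G (i + 1) - G i) • ∑ j ∈ Finset.range (i + 1), (w j - (k j : ℝ) / N)| :=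
          Finset.abs_sum_le_sum_abs _ _
      _ ≤ ∑ i ∈ Finset.range (N - 1), (1 / (n:ℝ)) * (1 / (N:ℝ)) := by
          apply Finset.sum_le_sum
          intro i hi
          rw [Finset.mem_range] at hi
          rw [smul_eq_mul, abs_mul]
          have h1 : |G (i + 1) - G i| ≤ 1 / n := by
            have hlip := hf.dist_le_mul (pt d n hn0 (i + 1)) (pt d n hn0 i)
            rw [NNReal.coe_one, one_mul, Real.dist_eq] at hlip
            calc |G (i + 1) - G i| ≤ dist (pt d n hn0 (i + 1)) (pt d n hn0 i) := hlip
              _ = dist (pt d n hn0 i) (pt d n hn0 (i + 1)) := dist_comm _ _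
              _ ≤ 1 / n := dist_pt_adj d n hn2 i
          have h2 : |∑ j ∈ Finset.range (i + 1), (w j - (k j : ℝ) / N)| ≤ 1 / N :=
            hkbd (i + 1) (by omega)
          have h3 : (0:ℝ) ≤ |∑ j ∈ Finset.range (i + 1), (w j - (k j : ℝ) / N)| :=
            abs_nonneg _
          calc |G (i + 1) - G i| * |∑ j ∈ Finset.range (i + 1), (w j - (k j : ℝ) / N)|
              ≤ (1 / n) * |∑ j ∈ Finset.range (i + 1), (w j - (k j : ℝ) / N)| := by
                apply mul_le_mul_of_nonneg_right h1 h3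
            _ ≤ (1 / (n:ℝ)) * (1 / (N:ℝ)) := by
                apply mul_le_mul_of_nonneg_left h2 (by positivity)
      _ ≤ 1 / n := by
          rw [Finset.sum_const, Finset.card_range, nsmul_eq_mul]
          have hcast : ((N - 1 : ℕ) : ℝ) ≤ (N : ℝ) := by
            exact_mod_cast Nat.sub_le N 1
          calc ((N - 1 : ℕ) : ℝ) * (1 / (n:ℝ) * (1 / (N:ℝ))) ≤ (N : ℝ) * (1 / (n:ℝ) * (1 / (N:ℝ))) := by
                apply mul_le_mul_of_nonneg_right hcast (by positivity)
            _ = 1 / n := by field_simp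
  calc |∫ x, f x ∂μ - ∫ x, f x ∂(nu d n (by omega : 0 < n) k)|
      = |(∫ x, f x ∂μ - ∑ i ∈ Finset.range N, w i * G i)
          + ((∑ i ∈ Finset.range N, w i * G i)
            - ∑ i ∈ Finset.range N, ((k i : ℝ) / N) * G i)| := by
        rw [hIν]
        congr 1
        ring
    _ ≤ |∫ x, f x ∂μ - ∑ i ∈ Finset.range N, w i * G i|
        + |(∑ i ∈ Finset.range N, w i * G i)
          - ∑ i ∈ Finset.range N, ((k i : ℝ) / N) * G i| := abs_add_le _ _
    _ ≤ 1 / n + 1 / n := add_le_add hterm1 hterm2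
    _ = 2 / n := by ring

end Approx

section Count

lemma S_stuff (N : ℕ) (hN : 0 < N) :
    ({k : ℕ → ℕ | (∀ i, N ≤ i → k i = 0) ∧ ∑ i ∈ Finset.range N, k i = N}).Finite ∧
    ({k : ℕ → ℕ | (∀ i, N ≤ i → k i = 0) ∧
        ∑ i ∈ Finset.range N, k i = N}).ncard ≤ (N + N - 1).choose N := by
  classical
  set S := {k : ℕ → ℕ | (∀ i, N ≤ i → k i = 0) ∧ ∑ i ∈ Finset.range N, k i = N} with hS
  set T := {m : Multiset (Fin N) | Multiset.card m = N} with hT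
  set ψ : (ℕ → ℕ) → Multiset (Fin N) :=
    fun k => ∑ i : Fin N, Multiset.replicate (k i.1) i with hψ
  have hcount : ∀ k : ℕ → ℕ, ∀ i : Fin N, Multiset.count i (ψ k) = k i.1 := by
    intro k i
    rw [hψ]
    simp only
    rw [Multiset.count_sum']
    simp [Multiset.count_replicate]
  have hmaps : ∀ k ∈ S, ψ k ∈ T := by
    intro k hk
    show Multiset.card (ψ k) = N
    rw [hψ]
    simp only
    rw [Multiset.card_sum]
    rw [Finset.sum_congr rfl (fun i _ => Multiset.card_replicate (k i.1) i)]
    rw [Fin.sum_univ_eq_sum_range]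
    exact hk.2
  have hinj : Set.InjOn ψ S := by
    intro k hk k' hk' he
    funext i
    by_cases h : i < N
    · have h1 := hcount k ⟨i, h⟩
      have h2 := hcount k' ⟨i, h⟩
      rw [he] at h1
      rw [← h1, h2]
    · rw [hk.1 i (by omega), hk'.1 i (by omega)]
  set Φ : ↥S → Sym (Fin N) N := fun k => ⟨ψ k.1, hmaps k.1 k.2⟩ with hΦ
  have hΦinj : Function.Injective Φ := by
    intro a b hab
    apply Subtype.ext
    exact hinj a.2 b.2 (congrArg Subtype.val hab)
  have hSfin : S.Finite := by
    rw [← Set.finite_coe_iff]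
    exact Finite.of_injective Φ hΦinj
  refine ⟨hSfin, ?_⟩
  calc S.ncard = Nat.card ↥S := (Nat.card_coe_set_eq S).symm
    _ ≤ Nat.card (Sym (Fin N) N) := Nat.card_le_card_of_injective Φ hΦinj
    _ = (N + N - 1).choose N := by
        rw [Nat.card_eq_fintype_card, Sym.card_sym_eq_choose, Fintype.card_fin]

lemma choose_le_exp (d : ℕ) (γ : ℝ) (hγ : 0 < γ) (hγ1 : γ < 1) (n : ℕ)
    (hn3 : 3 ≤ n) (hn_le : (n : ℝ) ≤ 3 / γ) :
    (((n ^ d + n ^ d - 1).choose (n ^ d) : ℕ) : ℝ) ≤ Real.exp ((5 / γ) ^ d) := by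
  set N := n ^ d with hN
  have hNpos : 0 < N := pow_pos (by omega) d
  have hch : (N + N - 1).choose N ≤ 2 ^ (N + N - 1) := by
    set m := N + N - 1 with hm
    calc m.choose N ≤ ∑ i ∈ Finset.range (m + 1), m.choose i :=
          Finset.single_le_sum (f := fun i => m.choose i) (fun i _ => Nat.zero_le _)
            (Finset.mem_range.mpr (by omega))
      _ = 2 ^ m := Nat.sum_range_choose m
  have hcast : (((N + N - 1).choose N : ℕ) : ℝ) ≤ (2 : ℝ) ^ ((N + N - 1 : ℕ) : ℕ) := by
    exact_mod_cast hch
  have hexp : (2 : ℝ) ^ (N + N - 1 : ℕ) = Real.exp (((N + N - 1 : ℕ) : ℝ) * Real.log 2) := by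
    rw [← Real.log_pow, Real.exp_log (by positivity)]
  have hlog2 : Real.log 2 < 0.6931471808 := Real.log_two_lt_d9
  have hlog2' : 0 < Real.log 2 := Real.log_pos (by norm_num)
  have hkey : ((N + N - 1 : ℕ) : ℝ) * Real.log 2 ≤ (5 / γ) ^ d := by
    have hNr : ((N : ℕ) : ℝ) ≤ (3 / γ) ^ d := by
      rw [hN]
      push_cast
      exact pow_le_pow_left₀ (by positivity) hn_le d
    have hsub : ((N + N - 1 : ℕ) : ℝ) = 2 * (N : ℝ) - 1 := by
      push_cast [Nat.cast_sub (by omega : 1 ≤ N + N)]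
      ring
    rw [hsub]
    rcases Nat.eq_zero_or_pos d with hd | hd
    · subst hd
      simp only [pow_zero] at hNr ⊢
      have : (N:ℝ) = 1 := by
        have : N = 1 := by rw [hN, pow_zero]
        exact_mod_cast this
      rw [this]
      nlinarith
    · have h53 : (5 / 3 : ℝ) ≤ (5 / 3) ^ d := le_self_pow₀ (by norm_num) (by omega)
      have hmul : (5 / 3 : ℝ) ^ d * (3 / γ) ^ d = (5 / γ) ^ d := by
        rw [← mul_pow]
        congr 1
        field_simp
      have h3γpos : (0:ℝ) < (3 / γ) ^ d := by positivity
      have hNpos' : (0:ℝ) < (N:ℝ) := by exact_mod_cast hNpos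
      have hb1 : 2 * (N:ℝ) - 1 ≤ 2 * (3 / γ) ^ d := by nlinarith
      have h2l : 2 * Real.log 2 ≤ 5 / 3 := by nlinarith
      calc (2 * (N : ℝ) - 1) * Real.log 2 ≤ (2 * (3 / γ) ^ d) * Real.log 2 :=
            mul_le_mul_of_nonneg_right hb1 hlog2'.le
        _ ≤ (5 / 3) * (3 / γ) ^ d := by nlinarith [mul_le_mul_of_nonneg_right h2l h3γpos.le]
        _ ≤ (5 / 3) ^ d * (3 / γ) ^ d := mul_le_mul_of_nonneg_right h53 h3γpos.le
        _ = (5 / γ) ^ d := hmul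
  calc (((N + N - 1).choose N : ℕ) : ℝ) ≤ (2 : ℝ) ^ (N + N - 1 : ℕ) := hcast
    _ = Real.exp (((N + N - 1 : ℕ) : ℝ) * Real.log 2) := hexp
    _ ≤ Real.exp ((5 / γ) ^ d) := Real.exp_le_exp.mpr hkey

end Count

end Stmt19Aux

open Stmt19Aux in
theorem stmt19 (d : ℕ) (γ : ℝ) (hγ : 0 < γ) (hγ1 : γ < 1) :
    ∃ Λ : Set (Measure ↥(Set.Icc (0 : Fin d → ℝ) 1)), Λ.Finite ∧
      (∀ ν ∈ Λ, IsProbabilityMeasure ν) ∧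
      (Λ.ncard : ℝ) ≤ Real.exp ((5 / γ) ^ d) ∧
      ∀ μ : Measure ↥(Set.Icc (0 : Fin d → ℝ) 1), IsProbabilityMeasure μ →
        ∃ ν ∈ Λ,
          (⨆ f : {f : ↥(Set.Icc (0 : Fin d → ℝ) 1) → ℝ // LipschitzWith 1 f},
            |∫ x, f.1 x ∂μ - ∫ x, f.1 x ∂ν|) ≤ γ := by
  classical
  set n := ⌈(2:ℝ) / γ⌉₊ with hn
  have hn3 : 3 ≤ n := by
    have h2 : ((2:ℕ):ℝ) < 2 / γ := by
      push_cast
      rw [lt_div_iff₀ hγ]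
      nlinarith
    have := Nat.lt_ceil.mpr h2
    omega
  have hn2 : 2 ≤ n := by omega
  have hn0 : 0 < n := by omega
  have hn' : (0:ℝ) < n := by exact_mod_cast hn0
  have hn_le : (n:ℝ) ≤ 3 / γ := by
    have hceil : (n:ℝ) < 2 / γ + 1 := Nat.ceil_lt_add_one (by positivity)
    have h1 : (1:ℝ) ≤ 1 / γ := by
      rw [le_div_iff₀ hγ]; linarith
    have h3 : (3:ℝ) / γ = 2 / γ + 1 / γ := by ring
    linarith
  have hge : 2 / γ ≤ (n:ℝ) := Nat.le_ceil _
  have h2n : 2 / (n:ℝ) ≤ γ := by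
    rw [div_le_iff₀ hn']
    have := (div_le_iff₀ hγ).mp hge
    nlinarith
  set N := n ^ d with hN
  have hNpos : 0 < N := pow_pos hn0 d
  obtain ⟨hSfin, hScard⟩ := S_stuff N hNpos
  refine ⟨nu d n hn0 ''
      {k : ℕ → ℕ | (∀ i, N ≤ i → k i = 0) ∧ ∑ i ∈ Finset.range N, k i = N},
    hSfin.image _, ?_, ?_, ?_⟩
  · rintro ν ⟨k, hk, rfl⟩
    exact nu_prob hn0 k hk.2
  · calc ((nu d n hn0 ''
        {k : ℕ → ℕ | (∀ i, N ≤ i → k i = 0) ∧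
          ∑ i ∈ Finset.range N, k i = N}).ncard : ℝ)
        ≤ (({k : ℕ → ℕ | (∀ i, N ≤ i → k i = 0) ∧
            ∑ i ∈ Finset.range N, k i = N}).ncard : ℝ) := by
          exact_mod_cast Set.ncard_image_le hSfin
      _ ≤ (((N + N - 1).choose N : ℕ) : ℝ) := by exact_mod_cast hScard
      _ ≤ Real.exp ((5 / γ) ^ d) := choose_le_exp d γ hγ hγ1 n hn3 hn_le
  · intro μ hμ
    haveI := hμ
    obtain ⟨k, hk0, hksum, hb⟩ := approx d n hn2 μ
    refine ⟨nu d n hn0 k, ⟨k, ⟨hk0, hksum⟩, rfl⟩, ?_⟩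
    apply Real.iSup_le _ hγ.le
    intro f
    calc |∫ x, f.1 x ∂μ - ∫ x, f.1 x ∂(nu d n hn0 k)| ≤ 2 / n := hb f.1 f.2
      _ ≤ γ := h2n
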